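/- arXiv:1411.7260 — 3 statements merged into one kernel-verified Lean document; each statement's English description precedes it below -/
import Mathlib

section
/- Let n ≥ 1, let λ : {1,…,n} → ℤ be strictly decreasing (λ₁ > λ₂ > … > λₙ), let w be a permutation of {1,…,n} with w ≠ id, and let I ⊆ {1,…,n−1} be a set of indices such that for every i ∈ I one has λ_{w⁻¹(i)} > λ_{w⁻¹(i+1)}. Then there exists an index i ∈ {1,…,n−1} with i ∉ I such that ∑_{j=1}^{i} (λ_{w⁻¹(j)} − λ_j) ≤ − min_{1≤k≤n−1} (λ_k − λ_{k+1}). -/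
private lemma aux_sum {α : Type*} [DecidableEq α] (f : α → ℤ) (δ : ℤ) :
    ∀ m : ℕ, ∀ S T : Finset α, S.card = m → T.card = m →
      (∀ x ∈ S, ∀ y ∈ T, f x + δ ≤ f y) →
      ∑ x ∈ S, f x + m * δ ≤ ∑ y ∈ T, f y := by
  intro m
  induction m with
  | zero =>
    intro S T hS hT _
    rw [Finset.card_eq_zero.mp hS, Finset.card_eq_zero.mp hT]
    simp
  | succ m ih =>
    intro S T hS hT h
    obtain ⟨a, ha⟩ := Finset.card_pos.mp (by omega : 0 < S.card)
    obtain ⟨b, hb⟩ := Finset.card_pos.mp (by omega : 0 < T.card)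
    have hS' : (S.erase a).card = m := by rw [Finset.card_erase_of_mem ha, hS]; omega
    have hT' : (T.erase b).card = m := by rw [Finset.card_erase_of_mem hb, hT]; omega
    have hrec := ih (S.erase a) (T.erase b) hS' hT'
      (fun x hx y hy => h x (Finset.mem_of_mem_erase hx) y (Finset.mem_of_mem_erase hy))
    have h1 : f a + ∑ x ∈ S.erase a, f x = ∑ x ∈ S, f x := Finset.add_sum_erase _ _ ha
    have h2 : f b + ∑ y ∈ T.erase b, f y = ∑ y ∈ T, f y := Finset.add_sum_erase _ _ hb
    have h3 := h a ha b hb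
    push_cast
    push_cast at hrec
    linarith

/-- Root-system lemma (type A, one embedding), 0-indexed: indices `i` with
`i + 1 < n` correspond to the simple roots `α_{i+1}` of `GL_n`. -/
theorem stmt0 (n : ℕ) (hn : 1 ≤ n) (lam : Fin n → ℤ) (hlam : StrictAnti lam)
    (w : Equiv.Perm (Fin n)) (hw : w ≠ 1)
    (I : Set ℕ) (hI : ∀ i ∈ I, i + 1 < n)
    (hdom : ∀ i : ℕ, ∀ hi : i + 1 < n, i ∈ I →
      lam (w⁻¹ ⟨i, Nat.lt_of_succ_lt hi⟩) > lam (w⁻¹ ⟨i + 1, hi⟩)) :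
    ∃ i : ℕ, ∃ _ : i + 1 < n, i ∉ I ∧
      (∑ j ∈ Finset.univ.filter (fun j : Fin n => (j : ℕ) ≤ i),
          (lam (w⁻¹ j) - lam j)) ≤
        - sInf {d : ℤ | ∃ k : ℕ, ∃ hk : k + 1 < n,
            d = lam ⟨k, Nat.lt_of_succ_lt hk⟩ - lam ⟨k + 1, hk⟩} := by
  classical
  rcases Nat.lt_or_ge n 2 with h2 | h2
  · exfalso
    have hn1 : n = 1 := by omega
    subst hn1
    exact hw (Equiv.ext fun x => Subsingleton.elim _ _)
  set u : Equiv.Perm (Fin n) := w⁻¹ with hu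
  set D : Set ℤ := {d : ℤ | ∃ k : ℕ, ∃ hk : k + 1 < n,
      d = lam ⟨k, Nat.lt_of_succ_lt hk⟩ - lam ⟨k + 1, hk⟩} with hD
  set δ : ℤ := sInf D with hδ
  have hDfin : D.Finite := by
    apply Set.Finite.subset (Set.finite_range (fun p : Fin n × Fin n => lam p.1 - lam p.2))
    rintro d ⟨k, hk, rfl⟩
    exact ⟨(⟨k, Nat.lt_of_succ_lt hk⟩, ⟨k + 1, hk⟩), rfl⟩
  have hDne : D.Nonempty := ⟨lam ⟨0, by omega⟩ - lam ⟨1, by omega⟩, 0, by omega, rfl⟩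
  have hδmem : δ ∈ D := hDne.csInf_mem hDfin
  have hδpos : 0 < δ := by
    obtain ⟨k, hk, hkd⟩ := hδmem
    rw [hkd]
    have := hlam (show (⟨k, Nat.lt_of_succ_lt hk⟩ : Fin n) < ⟨k + 1, hk⟩ by
      simp [Fin.lt_def])
    linarith
  have hbdd : BddBelow D := hDfin.bddBelow
  have hδle : ∀ x y : Fin n, (y : ℕ) < (x : ℕ) → δ ≤ lam y - lam x := by
    intro x y hyx
    have hy1 : (y : ℕ) + 1 < n := by omega
    have hmem : lam y - lam ⟨(y : ℕ) + 1, hy1⟩ ∈ D := ⟨(y : ℕ), hy1, by rw [Fin.eta]⟩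
    have h1 : δ ≤ lam y - lam ⟨(y : ℕ) + 1, hy1⟩ := csInf_le hbdd hmem
    have h2 : lam x ≤ lam ⟨(y : ℕ) + 1, hy1⟩ := hlam.antitone (by
      rw [Fin.le_def]; simpa using hyx)
    linarith
  set F : ℕ → Finset (Fin n) := fun i => Finset.univ.filter (fun j : Fin n => (j : ℕ) ≤ i)
    with hF
  have hmemF : ∀ (i : ℕ) (x : Fin n), x ∈ F i ↔ (x : ℕ) ≤ i := by
    intro i x; simp [hF]
  have key : ∃ i, ∃ _ : i + 1 < n, i ∉ I ∧ Finset.image u (F i) ≠ F i := by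
    by_contra hcon
    push_neg at hcon
    have fix : ∀ m : ℕ, ∀ hm : m < n, u ⟨m, hm⟩ = ⟨m, hm⟩ := by
      intro m
      induction m using Nat.strong_induction_on with
      | _ m ih =>
        intro hm
        have hfixlt : ∀ x : Fin n, (x : ℕ) < m → u x = x := by
          intro x hx
          have := ih x.1 hx x.2
          simpa [Fin.eta] using this
        have hPex : ∃ b, m ≤ b ∧ b < n ∧ (b ∉ I ∨ b + 1 = n) :=
          ⟨n - 1, by omega, by omega, Or.inr (by omega)⟩
        set b := Nat.find hPex with hb
        obtain ⟨hmb, hbn, hbI⟩ := Nat.find_spec hPex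
        have hblock : ∀ k, m ≤ k → k < b → k ∈ I ∧ k + 1 < n := by
          intro k hk1 hk2
          have hnk := Nat.find_min hPex hk2
          have hbn' : b < n := hbn
          have hkn : k + 1 < n := by omega
          refine ⟨?_, hkn⟩
          by_contra hkI
          exact hnk ⟨hk1, by omega, Or.inl hkI⟩
        have hFb : Finset.image u (F b) = F b := by
          by_cases hbn1 : b + 1 = n
          · have hFbu : F b = Finset.univ := by
              apply Finset.eq_univ_iff_forall.mpr
              intro x
              rw [hmemF]
              omega
            rw [hFbu]
            exact Finset.image_univ_equiv u
          · exact hcon b (by omega) (hbI.resolve_right hbn1)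
        have chain : ∀ k (hk : m ≤ k), k ≤ b → ∀ hkn : k < n,
            u ⟨m, hm⟩ ≤ u ⟨k, hkn⟩ := by
          intro k hk
          induction k, hk using Nat.le_induction with
          | base => intro _ hkn; exact le_of_eq rfl
          | succ k hk ihk =>
            intro hk1b hk1n
            have hkb : k < b := by omega
            obtain ⟨hkI, hkn1⟩ := hblock k hk hkb
            have hdomk := hdom k hkn1 hkI
            have hlt : u ⟨k, Nat.lt_of_succ_lt hkn1⟩ < u ⟨k + 1, hkn1⟩ :=
              hlam.lt_iff_gt.mp hdomk
            have h1 := ihk (by omega) (Nat.lt_of_succ_lt hkn1)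
            exact le_trans h1 (le_of_lt hlt)
        have hge : (⟨m, hm⟩ : Fin n) ≤ u ⟨m, hm⟩ := by
          by_contra hlt'
          push_neg at hlt'
          have h1 : (↑(u ⟨m, hm⟩) : ℕ) < m := hlt'
          have h2 : u (u ⟨m, hm⟩) = u ⟨m, hm⟩ := hfixlt _ h1
          have h3 : u ⟨m, hm⟩ = ⟨m, hm⟩ := u.injective h2
          rw [h3] at h1
          exact absurd h1 (lt_irrefl m)
        set x : Fin n := u.symm ⟨m, hm⟩ with hx
        have hux : u x = ⟨m, hm⟩ := u.apply_symm_apply _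
        have hxge : m ≤ (x : ℕ) := by
          by_contra hxm
          push_neg at hxm
          have h4 := hfixlt x hxm
          rw [h4] at hux
          rw [hux] at hxm
          exact absurd hxm (lt_irrefl m)
        have hxle : (x : ℕ) ≤ b := by
          by_contra hxb
          push_neg at hxb
          have hmFb : (⟨m, hm⟩ : Fin n) ∈ F b := (hmemF _ _).mpr hmb
          rw [← hFb] at hmFb
          obtain ⟨y, hy, hyx⟩ := Finset.mem_image.mp hmFb
          have hyx' : y = x := u.injective (hyx.trans hux.symm)
          rw [hyx'] at hy
          have := (hmemF _ _).mp hy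
          omega
        have hle : u ⟨m, hm⟩ ≤ ⟨m, hm⟩ := by
          have h5 := chain x.1 hxge hxle x.2
          rw [Fin.eta] at h5
          rw [hux] at h5
          exact h5
        exact le_antisymm hle hge
    have hu1 : u = 1 := Equiv.ext fun x => by simpa [Fin.eta] using fix x.1 x.2
    rw [hu] at hu1
    exact hw (inv_eq_one.mp hu1)
  obtain ⟨i, hi, hiI, hne⟩ := key
  refine ⟨i, hi, hiI, ?_⟩
  set T : Finset (Fin n) := F i with hT
  set S : Finset (Fin n) := Finset.image u (F i) with hS
  have hcard : S.card = T.card := Finset.card_image_of_injective _ u.injective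
  have hsum1 : ∑ j ∈ F i, (lam (u j) - lam j) = (∑ x ∈ S, lam x) - ∑ x ∈ T, lam x := by
    rw [Finset.sum_sub_distrib, hS, Finset.sum_image (fun a _ b _ h => u.injective h)]
  have hSd : (S \ T).Nonempty := by
    rw [Finset.sdiff_nonempty]
    intro hsub
    exact hne (Finset.eq_of_subset_of_card_le hsub (le_of_eq hcard.symm))
  have hcards : (S \ T).card = (T \ S).card := Finset.card_sdiff_comm hcard
  have hpair : ∀ x ∈ S \ T, ∀ y ∈ T \ S, lam x + δ ≤ lam y := by
    intro x hx y hy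
    have hx2 : ¬ (x : ℕ) ≤ i := by
      have := (Finset.mem_sdiff.mp hx).2
      rw [hT] at this
      simpa [hmemF] using this
    have hy2 : (y : ℕ) ≤ i := (hmemF _ _).mp (by rw [← hT]; exact (Finset.mem_sdiff.mp hy).1)
    have := hδle x y (by omega)
    linarith
  have haux := aux_sum lam δ (S \ T).card (S \ T) (T \ S) rfl hcards.symm hpair
  have hc1 : 1 ≤ (S \ T).card := Finset.card_pos.mpr hSd
  have hδc : δ ≤ ((S \ T).card : ℤ) * δ :=
    le_mul_of_one_le_left (le_of_lt hδpos) (by exact_mod_cast hc1)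
  have e1 : ∑ x ∈ S ∩ T, lam x + ∑ x ∈ S \ T, lam x = ∑ x ∈ S, lam x :=
    Finset.sum_inter_add_sum_sdiff S T lam
  have e2 : ∑ x ∈ T ∩ S, lam x + ∑ x ∈ T \ S, lam x = ∑ x ∈ T, lam x :=
    Finset.sum_inter_add_sum_sdiff T S lam
  rw [Finset.inter_comm] at e2
  calc (∑ j ∈ F i, (lam (u j) - lam j)) = (∑ x ∈ S, lam x) - ∑ x ∈ T, lam x := hsum1
    _ ≤ -δ := by linarith
end

section
/- Let (A, m) be a Noetherian local integral domain and let B be a commutative A-algebra which, as an A-module, is isomorphic to a submodule of a finite free A-module A^r. Then: (1) B is a finitely generated A-module; (2) for every associated prime q of B (as a B-module over itself), dim(B/q) = dim(A); in particular all associated primes of B are minimal, B is equidimensional of dimension dim A, and B has no embedded primes. -/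
open Order in
/-- Dimension equality for injective integral extensions. -/
lemma aux_ringKrullDim_eq_of_integral {R S : Type*} [CommRing R] [CommRing S] [Algebra R S]
    [Algebra.IsIntegral R S] [Nontrivial S]
    (h : Function.Injective (algebraMap R S)) : ringKrullDim S = ringKrullDim R := by
  have hR : Nontrivial R := (algebraMap R S).domain_nontrivial
  apply le_antisymm
  · exact Order.krullDim_le_of_strictMono (PrimeSpectrum.comap (algebraMap R S))
      (fun P Q hPQ => by
        obtain ⟨x, hxQ, hxP⟩ := SetLike.exists_of_lt (show P.asIdeal < Q.asIdeal from hPQ)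
        exact Ideal.comap_lt_comap_of_integral_mem_sdiff (I := P.asIdeal) hPQ.le ⟨hxQ, hxP⟩
          (Algebra.IsIntegral.isIntegral x))
  · have key : ∀ n (p : LTSeries (PrimeSpectrum R)), p.length = n →
        ∃ q : LTSeries (PrimeSpectrum S), q.length = n ∧
          q.last.asIdeal.comap (algebraMap R S) = p.last.asIdeal := by
      intro n
      induction n with
      | zero =>
        intro p _
        haveI : p.last.asIdeal.IsPrime := p.last.isPrime
        have hbot : (⊥ : Ideal S).comap (algebraMap R S) ≤ p.last.asIdeal := by
          intro x hx
          have hx0 : algebraMap R S x = 0 := by simpa using hx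
          have : x = 0 := h (by simpa using hx0)
          simp [this]
        obtain ⟨Q, _, hQp, hQc⟩ :=
          Ideal.exists_ideal_over_prime_of_isIntegral p.last.asIdeal ⊥ hbot
        exact ⟨RelSeries.singleton _ ⟨Q, hQp⟩, rfl, hQc⟩
      | succ n ih =>
        intro p hp
        obtain ⟨q', hq'len, hq'c⟩ := ih p.eraseLast (by simp [hp])
        have hlt : p.eraseLast.last < p.last :=
          p.eraseLast_last_rel_last (by omega)
        haveI : p.last.asIdeal.IsPrime := p.last.isPrime
        have hle : q'.last.asIdeal.comap (algebraMap R S) ≤ p.last.asIdeal := by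
          rw [hq'c]; exact le_of_lt hlt
        obtain ⟨Q, hQge, hQp, hQc⟩ :=
          Ideal.exists_ideal_over_prime_of_isIntegral p.last.asIdeal q'.last.asIdeal hle
        have hne : q'.last ≠ (⟨Q, hQp⟩ : PrimeSpectrum S) := by
          intro hEq
          apply hlt.ne
          apply PrimeSpectrum.ext
          rw [← hq'c, ← hQc, hEq]
        have hQlt : q'.last < (⟨Q, hQp⟩ : PrimeSpectrum S) :=
          lt_of_le_of_ne hQge hne
        exact ⟨q'.snoc ⟨Q, hQp⟩ hQlt, by simp [hq'len], by simpa using hQc⟩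
    show Order.krullDim (PrimeSpectrum R) ≤ Order.krullDim (PrimeSpectrum S)
    rw [Order.krullDim_eq_iSup_length (α := PrimeSpectrum S),
      Order.krullDim_eq_iSup_length (α := PrimeSpectrum R)]
    apply WithBot.coe_le_coe.mpr
    apply iSup_le
    intro p
    obtain ⟨q, hqlen, -⟩ := key p.length p rfl
    exact hqlen ▸ le_iSup (fun q : LTSeries (PrimeSpectrum S) => (q.length : ℕ∞)) q

theorem stmt8 {A : Type*} [CommRing A] [IsNoetherianRing A] [IsLocalRing A]
    [IsDomain A] (B : Type*) [CommRing B] [Algebra A B]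
    (r : ℕ) (f : B →ₗ[A] (Fin r → A)) (hf : Function.Injective f) :
    Module.Finite A B ∧
    (∀ q ∈ associatedPrimes B B, ringKrullDim (B ⧸ q) = ringKrullDim A) ∧
    associatedPrimes B B ⊆ minimalPrimes B ∧
    (∀ p ∈ minimalPrimes B, ringKrullDim (B ⧸ p) = ringKrullDim A) := by
  haveI hfin : Module.Finite A B := Module.Finite.of_injective f hf
  haveI : Algebra.IsIntegral A B := Algebra.IsIntegral.of_finite A B
  -- torsion-freeness of B over A
  have htf : ∀ (a : A) (b : B), a • b = 0 → a = 0 ∨ b = 0 := by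
    intro a b hab
    by_cases ha : a = 0
    · exact Or.inl ha
    right
    apply hf
    rw [map_zero]
    have hsmul : a • f b = 0 := by rw [← map_smul, hab, map_zero]
    funext i
    have hi : a * f b i = 0 := congrFun hsmul i
    exact (mul_eq_zero.mp hi).resolve_left ha
  -- dimension lemma for primes of B contracting to ⊥
  have dimQ : ∀ (P : Ideal B), P.IsPrime → P.comap (algebraMap A B) = ⊥ →
      ringKrullDim (B ⧸ P) = ringKrullDim A := by
    intro P hP hPc
    haveI := hP
    haveI : Module.Finite A (B ⧸ P) :=
      Module.Finite.of_surjective (Ideal.Quotient.mkₐ A P).toLinearMap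
        Ideal.Quotient.mk_surjective
    haveI : Algebra.IsIntegral A (B ⧸ P) := Algebra.IsIntegral.of_finite A _
    have hinj : Function.Injective (algebraMap A (B ⧸ P)) := by
      rw [injective_iff_map_eq_zero]
      intro a ha
      have hmem : algebraMap A B a ∈ P := by
        rw [← Ideal.Quotient.eq_zero_iff_mem]
        exact ha
      have : a ∈ P.comap (algebraMap A B) := hmem
      rw [hPc] at this
      simpa using this
    exact aux_ringKrullDim_eq_of_integral hinj
  -- associated primes contract to ⊥
  have hAss : ∀ q ∈ associatedPrimes B B, q.comap (algebraMap A B) = ⊥ := by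
    rintro q ⟨hq, x, rfl⟩
    have hx : x ≠ 0 := by
      rintro rfl
      exact hq.ne_top (eq_top_iff.mpr fun r _ => Ideal.le_radical (Submodule.mem_colon_singleton.mpr (by simp)))
    refine (Submodule.eq_bot_iff _).2 (fun a ha => ?_)
    rw [Ideal.mem_comap] at ha
    obtain ⟨n, hn⟩ := ha
    rw [← map_pow, Submodule.mem_colon_singleton, Submodule.mem_bot] at hn
    have : a ^ n • x = 0 := by rw [Algebra.smul_def]; exact hn
    exact eq_zero_of_pow_eq_zero ((htf _ x this).resolve_right hx)
  refine ⟨hfin, fun q hq => dimQ q hq.isPrime (hAss q hq), ?_, ?_⟩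
  · -- associated primes are minimal
    intro q hq
    have hqc := hAss q hq
    haveI hqp : q.IsPrime := hq.isPrime
    constructor
    · exact ⟨hqp, bot_le⟩
    · rintro p ⟨hpp, -⟩ hpq
      by_contra hqlep
      have hlt : p < q := lt_of_le_of_ne hpq (fun h => hqlep (le_of_eq h.symm))
      obtain ⟨x, hxq, hxp⟩ := SetLike.exists_of_lt hlt
      haveI := hpp
      have hcc := Ideal.comap_lt_comap_of_integral_mem_sdiff (I := p) hpq ⟨hxq, hxp⟩
        (Algebra.IsIntegral.isIntegral (R := A) x)
      rw [hqc] at hcc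
      exact not_lt_bot hcc
  · -- minimal primes
    intro p hp
    haveI hpp : p.IsPrime := hp.1.1
    apply dimQ p hpp
    refine (Submodule.eq_bot_iff _).2 (fun a ha => ?_)
    rw [Ideal.mem_comap] at ha
    set c := algebraMap A B a with hc
    have hnil : IsNilpotent (algebraMap B (Localization p.primeCompl) c) := by
      haveI := Ring.KrullDimLE.of_isLocalization p hp (Localization p.primeCompl)
      rw [Ring.KrullDimLE.isNilpotent_iff_mem_maximalIdeal]
      exact (IsLocalization.AtPrime.to_map_mem_maximal_iff (Localization p.primeCompl) p c).mpr ha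
    obtain ⟨n, hn⟩ := hnil
    rw [← map_pow] at hn
    obtain ⟨s, hs⟩ := (IsLocalization.map_eq_zero_iff p.primeCompl _ _).mp hn
    have hs0 : (s : B) ≠ 0 := by
      intro h
      have := s.2
      rw [h] at this
      exact this p.zero_mem
    have claim : ∀ m (b : B), b ≠ 0 → b * c ^ m = 0 → a = 0 := by
      intro m
      induction m with
      | zero => intro b hb h0; simp at h0; exact absurd h0 hb
      | succ k ih =>
        intro b hb h0
        by_cases hbk : b * c ^ k = 0
        · exact ih b hb hbk
        · have hsm : a • (b * c ^ k) = 0 := by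
            rw [Algebra.smul_def, ← hc]
            calc c * (b * c ^ k) = b * c ^ (k + 1) := by ring
              _ = 0 := h0
          exact (htf a _ hsm).resolve_right hbk
    exact claim n s hs0 hs
end

section
/- Let X be a locally Noetherian scheme such that for every point x ∈ X the local ring O_{X,x} has no embedded associated primes (i.e. every associated prime of O_{X,x} is a minimal prime). Assume furthermore that every irreducible component of X contains a point x such that O_{X,x} is reduced. Then X is reduced. -/
open AlgebraicGeometry TopologicalSpace Topology

/-- If `A` is a reduced localization of `R` at a prime `q`, and `p ≤ q` is a smaller prime,
then the localization `B` of `R` at `p` is also reduced. -/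
lemma aux_isReduced_of_le {R : Type*} [CommRing R] {p q : Ideal R} [p.IsPrime] [q.IsPrime]
    (hpq : p ≤ q) (A B : Type*) [CommRing A] [CommRing B] [Algebra R A] [Algebra R B]
    [IsLocalization.AtPrime A q] [IsLocalization.AtPrime B p]
    (hA : IsReduced A) : IsReduced B := by
  constructor
  intro b hb
  obtain ⟨⟨r, s⟩, (hrs : IsLocalization.mk' B r s = b)⟩ := IsLocalization.mk'_surjective p.primeCompl b
  obtain ⟨n, hn⟩ := hb
  rcases n with _ | n
  · -- `b ^ 0 = 0` means `B` is trivial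
    have h10 : (1 : B) = 0 := by simpa using hn
    haveI : Subsingleton B := subsingleton_of_zero_eq_one h10.symm
    exact Subsingleton.elim _ _
  · rw [← hrs, ← IsLocalization.mk'_pow] at hn
    obtain ⟨t, ht⟩ := (IsLocalization.mk'_eq_zero_iff _ _).mp hn
    -- ht : ↑t * r ^ (n+1) = 0
    have h1 : IsNilpotent ((t : R) * r) := by
      refine ⟨n + 1, ?_⟩
      have : ((t : R) * r) ^ (n + 1) = (t : R) ^ n * ((t : R) * r ^ (n + 1)) := by ring
      rw [this, ht, mul_zero]
    haveI := hA
    have h3 : algebraMap R A ((t : R) * r) = 0 := (h1.map (algebraMap R A)).eq_zero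
    obtain ⟨u, hu⟩ := (IsLocalization.map_eq_zero_iff q.primeCompl A _).mp h3
    have hut : (u : R) * (t : R) ∈ p.primeCompl :=
      mul_mem (fun h => u.2 (hpq h)) t.2
    rw [← hrs, IsLocalization.mk'_eq_zero_iff]
    exact ⟨⟨(u : R) * (t : R), hut⟩, by
      show (u : R) * (t : R) * r = 0
      rw [mul_assoc, hu]⟩

/-- Reducedness of stalks propagates along specialization: the stalk at a generization of a
point with reduced stalk is reduced. -/
lemma aux_stalk_reduced_specializes {X : Scheme} {y z : X} (h : y ⤳ z)
    (hz : IsReduced (X.presheaf.stalk z)) : IsReduced (X.presheaf.stalk y) := by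
  obtain ⟨_, ⟨U, (hU : IsAffineOpen U), rfl⟩, hzU, -⟩ :=
    X.isBasis_affineOpens.exists_subset_of_mem_open (Set.mem_univ z) isOpen_univ
  have hyU : y ∈ U := h.mem_open U.2 hzU
  letI : Algebra Γ(X, U) (X.presheaf.stalk y) := X.presheaf.algebra_section_stalk ⟨y, hyU⟩
  letI : Algebra Γ(X, U) (X.presheaf.stalk z) := X.presheaf.algebra_section_stalk ⟨z, hzU⟩
  haveI := hU.isLocalization_stalk ⟨y, hyU⟩
  haveI := hU.isLocalization_stalk ⟨z, hzU⟩
  have hspec : hU.primeIdealOf ⟨y, hyU⟩ ⤳ hU.primeIdealOf ⟨z, hzU⟩ := by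
    apply hU.fromSpec.isOpenEmbedding.isInducing.specializes_iff.mp
    rwa [hU.fromSpec_primeIdealOf ⟨y, hyU⟩, hU.fromSpec_primeIdealOf ⟨z, hzU⟩]
  have hle : (hU.primeIdealOf ⟨y, hyU⟩).asIdeal ≤ (hU.primeIdealOf ⟨z, hzU⟩).asIdeal :=
    (PrimeSpectrum.le_iff_specializes _ _).mpr hspec
  exact aux_isReduced_of_le hle (X.presheaf.stalk z) (X.presheaf.stalk y) hz

open AlgebraicGeometry in
theorem stmt14 (X : Scheme) [IsLocallyNoetherian X]
    (h1 : ∀ x : X, ∀ p ∈ associatedPrimes (X.presheaf.stalk x) (X.presheaf.stalk x),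
      p ∈ minimalPrimes (X.presheaf.stalk x))
    (h2 : ∀ Z ∈ irreducibleComponents X, ∃ x ∈ Z,
      _root_.IsReduced (X.presheaf.stalk x)) :
    AlgebraicGeometry.IsReduced X := by
  have key : ∀ x : X, _root_.IsReduced (X.presheaf.stalk x) := by
    intro x
    by_contra hred
    obtain ⟨_, ⟨U, (hU : IsAffineOpen U), rfl⟩, hxU, -⟩ :=
      X.isBasis_affineOpens.exists_subset_of_mem_open (Set.mem_univ x) isOpen_univ
    letI : Algebra Γ(X, U) (X.presheaf.stalk x) := X.presheaf.algebra_section_stalk ⟨x, hxU⟩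
    haveI := hU.isLocalization_stalk ⟨x, hxU⟩
    haveI : IsNoetherianRing Γ(X, U) := IsLocallyNoetherian.component_noetherian ⟨U, hU⟩
    haveI hNoeth : IsNoetherianRing (X.presheaf.stalk x) :=
      IsLocalization.isNoetherianRing (hU.primeIdealOf ⟨x, hxU⟩).asIdeal.primeCompl _ ‹_›
    -- get a nonzero nilpotent `a`
    obtain ⟨a, hnil, ha⟩ : ∃ a : X.presheaf.stalk x, IsNilpotent a ∧ a ≠ 0 := by
      by_contra hc
      push_neg at hc
      exact hred ⟨fun a hnila => hc a hnila⟩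
    obtain ⟨P, hPass, hannP⟩ :=
      exists_le_isAssociatedPrime_of_isNoetherianRing (X.presheaf.stalk x) a ha
    haveI hPprime : P.IsPrime := hPass.isPrime
    have hPmin : P ∈ minimalPrimes (X.presheaf.stalk x) := h1 x P hPass
    have hdisj := (IsLocalization.isPrime_iff_isPrime_disjoint
      (hU.primeIdealOf ⟨x, hxU⟩).asIdeal.primeCompl (X.presheaf.stalk x) P).mp hPprime
    haveI hp₀prime : (P.comap (algebraMap Γ(X, U) (X.presheaf.stalk x))).IsPrime := hdisj.1
    have hp₀q : P.comap (algebraMap Γ(X, U) (X.presheaf.stalk x)) ≤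
        (hU.primeIdealOf ⟨x, hxU⟩).asIdeal := by
      intro r hr
      by_contra hrq
      exact Set.disjoint_left.mp hdisj.2 hrq hr
    -- the point `y` corresponding to the comap of `P`
    set w : PrimeSpectrum Γ(X, U) :=
      ⟨P.comap (algebraMap Γ(X, U) (X.presheaf.stalk x)), hp₀prime⟩ with hw_def
    have hyU : hU.fromSpec.base w ∈ U := by
      have : hU.fromSpec.base w ∈ Set.range hU.fromSpec.base := Set.mem_range_self w
      rwa [hU.range_fromSpec] at this
    -- the stalk at `y` is a localization of `Γ(X,U)` at `w`
    letI : Algebra Γ(X, U) (X.presheaf.stalk (hU.fromSpec.base w)) :=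
      X.presheaf.algebra_section_stalk ⟨hU.fromSpec.base w, hyU⟩
    haveI hBloc := hU.isLocalization_stalk' w hyU
    -- `y` has no proper generalizations
    have hymax : ∀ y' : X, y' ⤳ hU.fromSpec.base w → y' = hU.fromSpec.base w := by
      intro y' hy'
      have hy'U : y' ∈ U := hy'.mem_open U.2 hyU
      have : y' ∈ Set.range hU.fromSpec.base := by rw [hU.range_fromSpec]; exact hy'U
      obtain ⟨w', hw'⟩ := this
      have hww : w' ⤳ w := hU.fromSpec.isOpenEmbedding.isInducing.specializes_iff.mp
        (by rw [hw']; exact hy')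
      have hle' : w'.asIdeal ≤ w.asIdeal := (PrimeSpectrum.le_iff_specializes _ _).mpr hww
      -- transfer to the stalk at x via the prime correspondence
      set ι := IsLocalization.orderIsoOfPrime
        (hU.primeIdealOf ⟨x, hxU⟩).asIdeal.primeCompl (X.presheaf.stalk x) with hι
      have hdisj' : Disjoint ((hU.primeIdealOf ⟨x, hxU⟩).asIdeal.primeCompl : Set Γ(X, U))
          (w'.asIdeal : Set Γ(X, U)) :=
        Set.disjoint_left.mpr fun {m} hm hm' => hm (hp₀q (hle' hm'))
      have hWle : ι.symm ⟨w'.asIdeal, ⟨w'.2, hdisj'⟩⟩ ≤ ι.symm (ι ⟨P, hPprime⟩) := by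
        apply ι.symm.monotone
        exact hle'
      rw [ι.symm_apply_apply] at hWle
      have hPle : P ≤ (ι.symm ⟨w'.asIdeal, ⟨w'.2, hdisj'⟩⟩ : {p : Ideal (X.presheaf.stalk x) // p.IsPrime}).1 :=
        hPmin.2 ⟨(ι.symm ⟨w'.asIdeal, ⟨w'.2, hdisj'⟩⟩).2, bot_le⟩ hWle
      have hWP : ι.symm ⟨w'.asIdeal, ⟨w'.2, hdisj'⟩⟩ = ⟨P, hPprime⟩ :=
        Subtype.ext (le_antisymm hWle hPle)
      have : (⟨w'.asIdeal, ⟨w'.2, hdisj'⟩⟩ :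
          {p : Ideal Γ(X, U) // p.IsPrime ∧ Disjoint ((hU.primeIdealOf ⟨x, hxU⟩).asIdeal.primeCompl : Set Γ(X, U)) ↑p}) = ι ⟨P, hPprime⟩ := by
        rw [← hWP, ι.apply_symm_apply]
      have hww' : w' = w := PrimeSpectrum.ext (congrArg Subtype.val this)
      rw [← hw', hww']
    -- the closure of `y` is an irreducible component
    have hZ := irreducibleComponent_mem_irreducibleComponents (hU.fromSpec.base w)
    have hZclosed := isClosed_of_mem_irreducibleComponents _ hZ
    have hZirr : IsIrreducible (irreducibleComponent (hU.fromSpec.base w)) :=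
      isIrreducible_irreducibleComponent
    have hgen : closure ({hZirr.genericPoint} : Set X) =
        irreducibleComponent (hU.fromSpec.base w) := hZirr.closure_genericPoint hZclosed
    have hηy : hZirr.genericPoint ⤳ hU.fromSpec.base w := by
      rw [specializes_iff_mem_closure, hgen]
      exact mem_irreducibleComponent
    have hηeq : hZirr.genericPoint = hU.fromSpec.base w := hymax _ hηy
    -- get a point with reduced stalk on the component
    obtain ⟨z, hzZ, hzred⟩ := h2 _ hZ
    have hyz : hU.fromSpec.base w ⤳ z := by
      rw [specializes_iff_mem_closure, ← hηeq, hgen]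
      exact hzZ
    haveI hyred : _root_.IsReduced (X.presheaf.stalk (hU.fromSpec.base w)) :=
      aux_stalk_reduced_specializes hyz hzred
    -- but the stalk at `y` contains a nonzero nilpotent, contradiction
    haveI hTloc : IsLocalization.AtPrime (Localization.AtPrime P) w.asIdeal :=
      IsLocalization.isLocalization_isLocalization_atPrime_isLocalization
        (hU.primeIdealOf ⟨x, hxU⟩).asIdeal.primeCompl (Localization.AtPrime P) P
    let e : Localization.AtPrime P ≃ₐ[Γ(X, U)] X.presheaf.stalk (hU.fromSpec.base w) :=
      @IsLocalization.algEquiv _ _ w.asIdeal.primeCompl _ _ _ _ _ _ _ hBloc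
    have hb0 : algebraMap (X.presheaf.stalk x) (Localization.AtPrime P) a ≠ 0 := by
      intro hb
      obtain ⟨m, hm⟩ := (IsLocalization.map_eq_zero_iff P.primeCompl _ _).mp hb
      refine m.2 (hannP ?_)
      rw [Submodule.mem_colon_singleton, smul_eq_mul, Submodule.mem_bot]
      exact hm
    have hbnil : IsNilpotent (e (algebraMap (X.presheaf.stalk x) (Localization.AtPrime P) a)) :=
      (hnil.map (algebraMap (X.presheaf.stalk x) (Localization.AtPrime P))).map e
    have : e (algebraMap (X.presheaf.stalk x) (Localization.AtPrime P) a) = 0 :=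
      hbnil.eq_zero
    exact hb0 (by
      apply e.injective
      rw [this, map_zero])
  exact isReduced_of_isReduced_stalk X
end
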